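/- arXiv:2101.12179 — 2 statements merged into one kernel-verified Lean document; each statement's English description precedes it below -/
import Mathlib

section
/- Let 1 ≤ p, q < ∞, let 0 < α < 1/p, and let r be the smallest integer with r > α. Let a, b be real numbers with 0 ≤ a < b ≤ 1. Then the Besov seminorm of the indicator function 1_{[a,b)} on [0,1] satisfies the explicit bound |1_{[a,b)}|_{B^α_{p,q}} ≤ 2^r · ( 1/(q(1/p − α)) + 1/(αq) )^{1/q}; in particular it is finite. -/
open MeasureTheory Set
open scoped ENNReal

/-- B-spline basis function of degree `k` with knot vector `ξ = (ξ₀, …, ξ_{k+1})`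
(0-indexed), defined by the Cox–de Boor recursion. -/
noncomputable def bspline : (k : ℕ) → (Fin (k + 2) → ℝ) → ℝ → ℝ
  | 0, ξ, x => if ξ 0 ≤ x ∧ x < ξ 1 then 1 else 0
  | (m + 1), ξ, x =>
      (x - ξ 0) / (ξ ⟨m + 1, by omega⟩ - ξ 0) * bspline m (fun i => ξ i.castSucc) x
      + (ξ (Fin.last (m + 2)) - x) / (ξ (Fin.last (m + 2)) - ξ 1) *
          bspline m (fun i => ξ i.succ) x

/-- The `r`-th order forward finite difference `Δ_h^r f (x)`. -/
noncomputable def finiteDiff (r : ℕ) (h : ℝ) (f : ℝ → ℝ) (x : ℝ) : ℝ :=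
  ∑ j ∈ Finset.range (r + 1), (r.choose j : ℝ) * (-1 : ℝ) ^ (r - j) * f (x + j * h)

/-- The `r`-th order modulus of smoothness `ω_r(f, t)_p` on `[0,1]`. -/
noncomputable def modSmooth (p : ℝ) (r : ℕ) (f : ℝ → ℝ) (t : ℝ) : ℝ :=
  sSup ((fun h => (∫ x in Set.Ioo (0 : ℝ) (1 - r * h), |finiteDiff r h f x| ^ p) ^ (1 / p)) ''
    Set.Ioc 0 t)

/-- The smallest integer `r` with `r > α` (for `α > 0`). -/
noncomputable def besovR (α : ℝ) : ℕ := ⌊α⌋₊ + 1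

/-- The Besov seminorm `|f|_{B^α_{p,q}}` on `[0,1]`, valued in `ℝ≥0∞`. -/
noncomputable def besovSeminorm (p q α : ℝ) (f : ℝ → ℝ) : ℝ≥0∞ :=
  (∫⁻ t in Set.Ioi (0 : ℝ),
      ENNReal.ofReal ((t ^ (-α) * modSmooth p (besovR α) f t) ^ q / t)) ^ (1 / q)

/-- Membership in the Besov space `B^α_{p,q}([0,1])`: `f ∈ L^p([0,1])` and the
Besov seminorm is finite. -/
def memBesov (p q α : ℝ) (f : ℝ → ℝ) : Prop :=
  MemLp f (ENNReal.ofReal p) (volume.restrict (Set.Icc (0 : ℝ) 1)) ∧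
  besovSeminorm p q α f < ⊤

lemma finiteDiff_one' (h : ℝ) (f : ℝ → ℝ) (x : ℝ) :
    finiteDiff 1 h f x = f (x + h) - f x := by
  simp [finiteDiff, Finset.sum_range_succ]
  ring

lemma modSmooth_nonneg' (p : ℝ) (r : ℕ) (f : ℝ → ℝ) (t : ℝ) : 0 ≤ modSmooth p r f t :=
  Real.sSup_nonneg fun x hx => by
    obtain ⟨h, -, rfl⟩ := hx
    exact Real.rpow_nonneg
      (integral_nonneg fun y => Real.rpow_nonneg (abs_nonneg _) _) _

lemma modSmooth_indicator_le' (p : ℝ) (hp : 1 ≤ p) (a b t : ℝ) (ht : 0 < t) :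
    modSmooth p 1 ((Set.Ico a b).indicator fun _ => 1) t ≤ 2 * (min t 1) ^ (1 / p) := by
  have hp0 : 0 < p := lt_of_lt_of_le one_pos hp
  have hmt : 0 < min t 1 := lt_min ht one_pos
  have hrhs : 0 ≤ 2 * (min t 1) ^ (1 / p) := by positivity
  apply Real.sSup_le _ hrhs
  rintro y ⟨h, ⟨hh0, hht⟩, rfl⟩
  set f := (Set.Ico a b).indicator (fun _ => (1:ℝ)) with hf
  have hintnn : ∀ x : ℝ, (0:ℝ) ≤ |finiteDiff 1 h f x| ^ p := fun x =>
    Real.rpow_nonneg (abs_nonneg _) _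
  have hIle : (∫ x in Set.Ioo (0 : ℝ) (1 - (1:ℕ) * h), |finiteDiff 1 h f x| ^ p)
      ≤ 2 * min h 1 := by
    by_cases hh1 : h ≤ 1
    · rw [min_eq_left hh1]
      set U : Set ℝ := Set.Ico (a - h) a ∪ Set.Ico (b - h) b with hU
      have hUm : MeasurableSet U := measurableSet_Ico.union measurableSet_Ico
      have hpt : ∀ x, |finiteDiff 1 h f x| ^ p ≤ U.indicator 1 x := by
        intro x
        by_cases hne : f (x + h) = f x
        · rw [finiteDiff_one', hne, sub_self, abs_zero, Real.zero_rpow hp0.ne']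
          exact Set.indicator_nonneg (fun _ _ => zero_le_one) x
        · have hx : x ∈ U := by
            by_cases h1 : x + h ∈ Set.Ico a b <;> by_cases h2 : x ∈ Set.Ico a b
            · exact absurd (by simp [hf, Set.indicator_of_mem, h1, h2]) hne
            · -- x + h ∈ [a,b), x ∉
              obtain ⟨hl, hr⟩ := h1
              rw [Set.mem_Ico, not_and_or, not_le, not_lt] at h2
              left
              constructor
              · linarith
              · rcases h2 with h2 | h2
                · exact h2
                · linarith
            · -- x ∈ [a,b), x + h ∉
              obtain ⟨hl, hr⟩ := h2
              rw [Set.mem_Ico, not_and_or, not_le, not_lt] at h1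
              right
              rcases h1 with h1 | h1
              · linarith
              · exact ⟨by linarith, hr⟩
            · exact absurd (by simp [hf, Set.indicator_of_notMem, h1, h2]) hne
          rw [Set.indicator_of_mem hx]
          have h01 : ∀ y, 0 ≤ f y ∧ f y ≤ 1 := by
            intro y
            simp only [hf, Set.indicator]
            split <;> norm_num
          have habs : |finiteDiff 1 h f x| ≤ 1 := by
            rw [finiteDiff_one', abs_sub_le_iff]
            have := h01 (x + h); have := h01 x
            constructor <;> linarith [((h01 (x+h)).1), ((h01 (x+h)).2), ((h01 x).1), ((h01 x).2)]
          simpa using Real.rpow_le_one (abs_nonneg _) habs hp0.le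
      have hint : Integrable (U.indicator (1 : ℝ → ℝ))
          (volume.restrict (Set.Ioo (0:ℝ) (1 - (1:ℕ) * h))) := by
        rw [integrable_indicator_iff hUm]
        apply (integrableOn_const_iff (C := (1:ℝ)) (by simp)).mpr
        right
        calc (volume.restrict (Set.Ioo (0:ℝ) (1 - (1:ℕ) * h))) U ≤ volume U :=
              Measure.restrict_le_self U
          _ ≤ volume (Set.Ico (a - h) a) + volume (Set.Ico (b - h) b) := measure_union_le _ _
          _ < ⊤ := by
              rw [Real.volume_Ico, Real.volume_Ico]
              exact ENNReal.add_lt_top.mpr ⟨ENNReal.ofReal_lt_top, ENNReal.ofReal_lt_top⟩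
      calc (∫ x in Set.Ioo (0 : ℝ) (1 - (1:ℕ) * h), |finiteDiff 1 h f x| ^ p)
          ≤ ∫ x in Set.Ioo (0 : ℝ) (1 - (1:ℕ) * h), U.indicator 1 x :=
            integral_mono_of_nonneg (Filter.Eventually.of_forall hintnn) hint
              (Filter.Eventually.of_forall hpt)
        _ = ((volume.restrict (Set.Ioo (0:ℝ) (1 - (1:ℕ) * h))) U).toReal :=
            integral_indicator_one hUm
        _ ≤ 2 * h := by
            apply ENNReal.toReal_le_of_le_ofReal (by linarith)
            calc (volume.restrict (Set.Ioo (0:ℝ) (1 - (1:ℕ) * h))) U ≤ volume U :=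
                  Measure.restrict_le_self U
              _ ≤ volume (Set.Ico (a - h) a) + volume (Set.Ico (b - h) b) :=
                  measure_union_le _ _
              _ ≤ ENNReal.ofReal (2 * h) := by
                  rw [Real.volume_Ico, Real.volume_Ico,
                    ← ENNReal.ofReal_add (by linarith) (by linarith)]
                  apply ENNReal.ofReal_le_ofReal
                  linarith
    · push_neg at hh1
      have : Set.Ioo (0 : ℝ) (1 - (1:ℕ) * h) = ∅ := by
        apply Set.Ioo_eq_empty
        simp only [Nat.cast_one, one_mul]
        intro hc
        linarith
      rw [this]
      simp only [Measure.restrict_empty, integral_zero_measure]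
      rw [min_eq_right hh1.le]
      linarith
  have hInn : (0:ℝ) ≤ ∫ x in Set.Ioo (0 : ℝ) (1 - (1:ℕ) * h), |finiteDiff 1 h f x| ^ p :=
    integral_nonneg hintnn
  calc (∫ x in Set.Ioo (0 : ℝ) (1 - (1:ℕ) * h), |finiteDiff 1 h f x| ^ p) ^ (1/p)
      ≤ (2 * min h 1) ^ (1/p) := Real.rpow_le_rpow hInn hIle (by positivity)
    _ = 2 ^ (1/p) * (min h 1) ^ (1/p) :=
        Real.mul_rpow (by norm_num) (le_min hh0.le zero_le_one)
    _ ≤ 2 * (min t 1) ^ (1/p) := by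
        apply mul_le_mul
        · calc (2:ℝ) ^ (1/p) ≤ 2 ^ (1:ℝ) :=
              Real.rpow_le_rpow_of_exponent_le one_le_two
                (by rw [div_le_one hp0]; exact hp)
            _ = 2 := Real.rpow_one 2
        · exact Real.rpow_le_rpow (le_min hh0.le zero_le_one)
            (min_le_min hht le_rfl) (by positivity)
        · positivity
        · norm_num
/-- for `1 ≤ p, q < ∞`, `0 < α < 1/p`, `r` the smallest integer with
`r > α`, and `0 ≤ a < b ≤ 1`, the Besov seminorm of the indicator of `[a, b)`
satisfies the explicit bound
`|1_{[a,b)}|_{B^α_{p,q}} ≤ 2^r · ( 1/(q(1/p − α)) + 1/(αq) )^{1/q}`. -/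
theorem indicator_besovSeminorm_bound (p q α : ℝ) (hp : 1 ≤ p) (hq : 1 ≤ q)
    (hα : 0 < α) (hαp : α < 1 / p) (a b : ℝ) (ha : 0 ≤ a) (hab : a < b) (hb : b ≤ 1) :
    besovSeminorm p q α (Set.indicator (Set.Ico a b) fun _ => (1 : ℝ)) ≤
      ENNReal.ofReal
        (2 ^ besovR α * (1 / (q * (1 / p - α)) + 1 / (α * q)) ^ (1 / q)) := by
  have hp0 : 0 < p := lt_of_lt_of_le one_pos hp
  have hq0 : 0 < q := lt_of_lt_of_le one_pos hq
  have hα1 : α < 1 := lt_of_lt_of_le hαp (by rw [div_le_one hp0]; exact hp)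
  have hr : besovR α = 1 := by
    simp [besovR, Nat.floor_eq_zero.mpr hα1]
  have hs0 : 0 < (1/p - α) * q := by
    apply mul_pos _ hq0
    linarith
  set f := (Set.Ico a b).indicator (fun _ => (1:ℝ)) with hf
  set S : ℝ := 1 / (q * (1 / p - α)) + 1 / (α * q) with hS
  -- the dominating function
  set g : ℝ → ℝ≥0∞ := fun t =>
    ENNReal.ofReal ((t ^ (-α) * (2 * (min t 1) ^ (1/p))) ^ q / t) with hg
  have hgmeas : Measurable g := by
    have h1 : Measurable fun t : ℝ => (t ^ (-α) * (2 * (min t 1) ^ (1/p))) ^ q / t := by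
      fun_prop
    exact ENNReal.measurable_ofReal.comp h1
  -- step 1 : pointwise bound on the integrand
  have step1 : besovSeminorm p q α f ≤ (∫⁻ t in Set.Ioi (0:ℝ), g t) ^ (1/q) := by
    unfold besovSeminorm
    rw [hr]
    apply ENNReal.rpow_le_rpow _ (by positivity)
    apply setLIntegral_mono hgmeas
    intro t ht
    rw [Set.mem_Ioi] at ht
    apply ENNReal.ofReal_le_ofReal
    rw [div_le_div_iff_of_pos_right ht]
    apply Real.rpow_le_rpow
    · exact mul_nonneg (Real.rpow_nonneg ht.le _) (modSmooth_nonneg' _ _ _ _)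
    · exact mul_le_mul_of_nonneg_left (modSmooth_indicator_le' p hp a b t ht)
        (Real.rpow_nonneg ht.le _)
    · exact hq0.le
  -- evaluate the dominating integral on (0,1]
  have hq0' : q ≠ 0 := hq0.ne'
  have hIoc : ∫⁻ t in Set.Ioc (0:ℝ) 1, g t
      = ENNReal.ofReal (2 ^ q * (1 / ((1/p - α) * q))) := by
    have heq : ∫⁻ t in Set.Ioc (0:ℝ) 1, g t
        = ∫⁻ t in Set.Ioc (0:ℝ) 1,
            ENNReal.ofReal (2 ^ q * t ^ ((1/p - α) * q - 1)) := by
      apply setLIntegral_congr_fun measurableSet_Ioc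
      rintro t ⟨ht0, ht1⟩
      simp only [hg]
      congr 1
      rw [min_eq_left ht1]
      have e1 : t ^ (-α) * (2 * t ^ (1/p)) = 2 * t ^ (1/p - α) := by
        rw [show (1/p - α) = -α + 1/p by ring, Real.rpow_add ht0]; ring
      rw [e1, Real.mul_rpow (by norm_num) (Real.rpow_nonneg ht0.le _),
        ← Real.rpow_mul ht0.le, mul_div_assoc]
      congr 1
      rw [show ((1/p - α) * q - 1) = (1/p - α) * q - 1 from rfl,
        Real.rpow_sub ht0, Real.rpow_one]
    rw [heq]
    have hexp : (-1:ℝ) < (1/p - α) * q - 1 := by linarith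
    have hint : IntegrableOn (fun t : ℝ => 2 ^ q * t ^ ((1/p - α) * q - 1))
        (Set.Ioc (0:ℝ) 1) := by
      apply Integrable.const_mul
      have := intervalIntegral.intervalIntegrable_rpow' (a := 0) (b := 1) hexp
      rwa [intervalIntegrable_iff, Set.uIoc_of_le zero_le_one] at this
    have hnn : (0:ℝ → ℝ) ≤ᵐ[volume.restrict (Set.Ioc (0:ℝ) 1)]
        fun t => 2 ^ q * t ^ ((1/p - α) * q - 1) := by
      refine (ae_restrict_iff' measurableSet_Ioc).mpr (Filter.Eventually.of_forall ?_)
      rintro t ⟨ht0, -⟩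
      exact mul_nonneg (Real.rpow_nonneg (by norm_num) _) (Real.rpow_nonneg ht0.le _)
    rw [← ofReal_integral_eq_lintegral_ofReal hint hnn]
    congr 1
    rw [MeasureTheory.integral_const_mul]
    congr 1
    rw [← intervalIntegral.integral_of_le zero_le_one,
      integral_rpow (Or.inl hexp), sub_add_cancel,
      Real.one_rpow, Real.zero_rpow hs0.ne']
    norm_num
  -- evaluate the dominating integral on (1,∞)
  have hαq : (0:ℝ) < α * q := mul_pos hα hq0
  have hIoi : ∫⁻ t in Set.Ioi (1:ℝ), g t
      = ENNReal.ofReal (2 ^ q * (1 / (α * q))) := by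
    have heq : ∫⁻ t in Set.Ioi (1:ℝ), g t
        = ∫⁻ t in Set.Ioi (1:ℝ), ENNReal.ofReal (2 ^ q * t ^ (-(α * q) - 1)) := by
      apply setLIntegral_congr_fun measurableSet_Ioi
      intro t ht
      rw [Set.mem_Ioi] at ht
      have ht0 : (0:ℝ) < t := lt_trans one_pos ht
      simp only [hg]
      congr 1
      rw [min_eq_right ht.le, Real.one_rpow, mul_one,
        mul_comm (t ^ (-α)) 2,
        Real.mul_rpow (by norm_num) (Real.rpow_nonneg ht0.le _),
        ← Real.rpow_mul ht0.le, mul_div_assoc]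
      congr 1
      rw [show (-(α * q) - 1 : ℝ) = -α * q - 1 by ring, Real.rpow_sub ht0, Real.rpow_one]
    rw [heq]
    have hexp : (-(α * q) - 1 : ℝ) < -1 := by linarith
    have hint : IntegrableOn (fun t : ℝ => 2 ^ q * t ^ (-(α * q) - 1))
        (Set.Ioi (1:ℝ)) :=
      Integrable.const_mul (integrableOn_Ioi_rpow_of_lt hexp one_pos) _
    have hnn : (0:ℝ → ℝ) ≤ᵐ[volume.restrict (Set.Ioi (1:ℝ))]
        fun t => 2 ^ q * t ^ (-(α * q) - 1) := by
      refine (ae_restrict_iff' measurableSet_Ioi).mpr (Filter.Eventually.of_forall ?_)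
      intro t ht
      rw [Set.mem_Ioi] at ht
      exact mul_nonneg (Real.rpow_nonneg (by norm_num) _)
        (Real.rpow_nonneg (lt_trans one_pos ht).le _)
    rw [← ofReal_integral_eq_lintegral_ofReal hint hnn]
    congr 1
    rw [MeasureTheory.integral_const_mul]
    congr 1
    rw [integral_Ioi_rpow_of_lt hexp one_pos, sub_add_cancel, Real.one_rpow]
    field_simp
  -- total bound
  have hs0' : 0 < q * (1/p - α) := mul_pos hq0 (by linarith)
  have hSnn : 0 ≤ S := add_nonneg (one_div_nonneg.mpr hs0'.le) (one_div_nonneg.mpr hαq.le)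
  have htot : (∫⁻ t in Set.Ioi (0:ℝ), g t) ≤ ENNReal.ofReal (2 ^ q * S) := by
    rw [show (Set.Ioi (0:ℝ)) = Set.Ioc 0 1 ∪ Set.Ioi 1 from
        (Set.Ioc_union_Ioi_eq_Ioi zero_le_one).symm,
      lintegral_union measurableSet_Ioi (Set.Ioc_disjoint_Ioi le_rfl),
      hIoc, hIoi, ← ENNReal.ofReal_add (by positivity) (by positivity)]
    apply ENNReal.ofReal_le_ofReal
    rw [hS]
    have : (1/p - α) * q = q * (1/p - α) := by ring
    rw [this]
    ring_nf
    exact le_rfl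
  calc besovSeminorm p q α f ≤ (∫⁻ t in Set.Ioi (0:ℝ), g t) ^ (1/q) := step1
    _ ≤ (ENNReal.ofReal (2 ^ q * S)) ^ (1/q) := ENNReal.rpow_le_rpow htot (by positivity)
    _ = ENNReal.ofReal ((2 ^ q * S) ^ (1/q)) :=
        ENNReal.ofReal_rpow_of_nonneg (by positivity) (by positivity)
    _ = ENNReal.ofReal (2 ^ besovR α * S ^ (1/q)) := by
        rw [hr, pow_one]
        congr 1
        rw [Real.mul_rpow (by positivity) hSnn]
        congr 1
        rw [← Real.rpow_mul (by norm_num), mul_one_div_cancel hq0', Real.rpow_one]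
end

section
/- Let k ≥ 1 be an integer, let ξ = (ξ_1, …, ξ_{k+2}) be a strictly increasing knot vector with 0 ≤ ξ_1 and ξ_{k+2} ≤ 1, let 1 ≤ p < ∞, and let r ≥ k + 1 be an integer. Then there exists a constant C > 0 (depending on k, ξ, p, r) such that the r-th order modulus of smoothness of B_k(·; ξ) on [0,1] satisfies ω_r(B_k(·; ξ), t)_p ≤ C · t^{k + 1/p} for all t ∈ (0, 1]. -/
open MeasureTheory Set
open scoped ENNReal

/-- truncated power -/
noncomputable def tp (k : ℕ) (a x : ℝ) : ℝ := if a ≤ x then (x - a) ^ k else 0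

lemma tp_succ (k : ℕ) (a x : ℝ) : tp (k + 1) a x = (x - a) * tp k a x := by
  unfold tp; split_ifs <;> ring

noncomputable def pdiff {n : ℕ} (ξ : Fin n → ℝ) (i : Fin n) : ℝ :=
  ∏ j, if j = i then 1 else (ξ i - ξ j)

noncomputable def bcoef (k : ℕ) (ξ : Fin (k + 2) → ℝ) (i : Fin (k + 2)) : ℝ :=
  (-1 : ℝ) ^ (k + 1) * (ξ (Fin.last (k + 1)) - ξ 0) / pdiff ξ i

lemma finiteDiff_eq_fwdDiff (r : ℕ) (h : ℝ) (f : ℝ → ℝ) (x : ℝ) :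
    finiteDiff r h f x = (fwdDiff h)^[r] f x := by
  rw [fwdDiff_iter_eq_sum_shift, finiteDiff]
  refine Finset.sum_congr rfl fun j _ => ?_
  push_cast [nsmul_eq_mul, zsmul_eq_mul]
  ring

lemma fwdDiff_iter_pow (a h : ℝ) (k : ℕ) : ∀ r, k < r →
    (fwdDiff h)^[r] (fun y : ℝ => (y - a) ^ k) = 0 := by
  induction k using Nat.strong_induction_on with
  | _ k IH =>
    intro r hkr
    obtain ⟨s, rfl⟩ : ∃ s, r = s + 1 := ⟨r - 1, by omega⟩
    rw [Function.iterate_succ_apply]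
    have hd : fwdDiff h (fun y : ℝ => (y - a) ^ k)
        = ∑ j ∈ Finset.range k, ((k.choose j : ℝ) * h ^ (k - j)) • fun y : ℝ => (y - a) ^ j := by
      funext y
      simp only [fwdDiff, Finset.sum_apply, Pi.smul_apply, smul_eq_mul]
      have hb : (y + h - a) ^ k = ∑ j ∈ Finset.range (k + 1),
          (y - a) ^ j * h ^ (k - j) * (k.choose j : ℝ) := by
        have := add_pow (y - a) h k
        convert this using 2
        ring
      rw [hb, Finset.sum_range_succ]
      simp only [Nat.sub_self, pow_zero, Nat.choose_self, Nat.cast_one, mul_one]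
      rw [add_sub_cancel_right]
      exact Finset.sum_congr rfl fun j _ => by ring
    rw [hd, fwdDiff_iter_finset_sum]
    refine Finset.sum_eq_zero fun j hj => ?_
    have hjk := Finset.mem_range.1 hj
    rw [fwdDiff_iter_const_smul, IH j hjk s (by omega)]
    simp

lemma pdiff_ne_zero {n : ℕ} {ξ : Fin n → ℝ} (hξ : StrictMono ξ) (i : Fin n) :
    pdiff ξ i ≠ 0 := by
  refine Finset.prod_ne_zero_iff.2 fun j _ => ?_
  split_ifs with hj
  · exact one_ne_zero
  · exact sub_ne_zero.2 (hξ.injective.ne (Ne.symm hj))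

lemma bspline_rep (k : ℕ) (ξ : Fin (k + 2) → ℝ) (hξ : StrictMono ξ) (x : ℝ) :
    bspline k ξ x = ∑ i, bcoef k ξ i * tp k (ξ i) x := by
  induction k generalizing x with
  | zero =>
    have h01 : ξ 0 < ξ 1 := hξ (by decide)
    have hL : Fin.last 1 = (1 : Fin 2) := rfl
    have hp0 : pdiff ξ 0 = ξ 0 - ξ 1 := by
      simp [pdiff, Fin.prod_univ_two]
    have hp1 : pdiff ξ 1 = ξ 1 - ξ 0 := by
      simp [pdiff, Fin.prod_univ_two, (by decide : (0 : Fin 2) ≠ 1)]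
    rw [Fin.sum_univ_two]
    have hne : ξ 0 - ξ 1 ≠ 0 := sub_ne_zero.2 h01.ne
    have hne' : ξ 1 - ξ 0 ≠ 0 := sub_ne_zero.2 h01.ne'
    have hb0 : bcoef 0 ξ 0 = 1 := by
      rw [bcoef, hL, hp0, div_eq_iff hne]; ring
    have hb1 : bcoef 0 ξ 1 = -1 := by
      rw [bcoef, hL, hp1, div_eq_iff hne']; ring
    rw [bspline, hb0, hb1]
    simp only [tp, pow_zero]
    rcases le_or_gt (ξ 1) x with hc | hc
    · rw [if_neg (fun hx => absurd hc (not_le.2 hx.2)), if_pos (le_trans h01.le hc),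
        if_pos hc]
      ring
    · rcases le_or_gt (ξ 0) x with hd | hd
      · rw [if_pos ⟨hd, hc⟩, if_pos hd, if_neg (not_le.2 hc)]; ring
      · rw [if_neg (fun hx => absurd hx.1 (not_le.2 hd)), if_neg (not_le.2 hd),
          if_neg (not_le.2 hc)]
        ring
  | succ m IH =>
    have hsm1 : StrictMono (fun i : Fin (m + 2) => ξ i.castSucc) :=
      fun a b hab => hξ (Fin.castSucc_lt_castSucc_iff.2 hab)
    have hsm2 : StrictMono (fun i : Fin (m + 2) => ξ i.succ) :=
      fun a b hab => hξ (Fin.succ_lt_succ_iff.2 hab)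
    have hne : ∀ i j : Fin (m + 3), i ≠ j → ξ i - ξ j ≠ 0 :=
      fun i j hij => sub_ne_zero.2 (hξ.injective.ne hij)
    set L : Fin (m + 3) := Fin.last (m + 2) with hLdef
    have h0L : (0 : Fin (m + 3)) ≠ L := by
      simp [hLdef, Fin.ext_iff]
    set G1 : Fin (m + 3) → ℝ :=
      fun i => ∏ j : Fin (m + 2), if j.castSucc = i then 1 else (ξ i - ξ j.castSucc) with hG1def
    set G2 : Fin (m + 3) → ℝ :=
      fun i => ∏ j : Fin (m + 2), if j.succ = i then 1 else (ξ i - ξ j.succ) with hG2def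
    have hG1ne : ∀ i, G1 i ≠ 0 := fun i => Finset.prod_ne_zero_iff.2 (fun j _ => by
      split_ifs with hj
      · exact one_ne_zero
      · exact hne i j.castSucc (fun hh => hj hh.symm))
    have hG2ne : ∀ i, G2 i ≠ 0 := fun i => Finset.prod_ne_zero_iff.2 (fun j _ => by
      split_ifs with hj
      · exact one_ne_zero
      · exact hne i j.succ (fun hh => hj hh.symm))
    have hpd1 : ∀ i : Fin (m + 3), pdiff ξ i = G1 i * (if L = i then 1 else (ξ i - ξ L)) := by
      intro i
      rw [pdiff, Fin.prod_univ_castSucc]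
    have hpd2 : ∀ i : Fin (m + 3), pdiff ξ i = (if 0 = i then 1 else (ξ i - ξ 0)) * G2 i := by
      intro i
      rw [pdiff, Fin.prod_univ_succ]
    have hpe1 : ∀ i' : Fin (m + 2), pdiff (fun i : Fin (m + 2) => ξ i.castSucc) i'
        = G1 i'.castSucc := by
      intro i'
      rw [pdiff, hG1def]
      exact Finset.prod_congr rfl fun j _ => by simp [Fin.castSucc_inj]
    have hpe2 : ∀ i' : Fin (m + 2), pdiff (fun i : Fin (m + 2) => ξ i.succ) i'
        = G2 i'.succ := by
      intro i'
      rw [pdiff, hG2def]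
      exact Finset.prod_congr rfl fun j _ => by simp [Fin.succ_inj]
    set F1 : Fin (m + 3) → ℝ :=
      fun i => (x - ξ 0) * (-1 : ℝ) ^ (m + 1) / G1 i * tp m (ξ i) x with hF1def
    set F2 : Fin (m + 3) → ℝ :=
      fun i => (ξ L - x) * (-1 : ℝ) ^ (m + 1) / G2 i * tp m (ξ i) x with hF2def
    have hd1 : ξ (⟨m + 1, by omega⟩ : Fin (m + 3)) - ξ 0 ≠ 0 :=
      hne _ _ (by simp [Fin.ext_iff])
    have hd2 : ξ L - ξ 1 ≠ 0 := hne _ _ (by simp [hLdef, Fin.ext_iff])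
    have hcast : ((Fin.last (m + 1)).castSucc : Fin (m + 3)) = ⟨m + 1, by omega⟩ := rfl
    have step1 : bspline (m + 1) ξ x = (∑ i' : Fin (m + 2), F1 i'.castSucc)
        + (∑ i' : Fin (m + 2), F2 i'.succ) := by
      rw [bspline, IH _ hsm1, IH _ hsm2, Finset.mul_sum, Finset.mul_sum]
      congr 1
      · refine Finset.sum_congr rfl fun i' _ => ?_
        rw [bcoef, hpe1, hF1def]
        simp only [hcast, Fin.castSucc_zero]
        field_simp [hd1, hG1ne]
      · refine Finset.sum_congr rfl fun i' _ => ?_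
        rw [bcoef, hpe2, hF2def]
        have hsl : ((Fin.last (m + 1)).succ : Fin (m + 3)) = L := rfl
        have hs0 : ((0 : Fin (m + 2)).succ : Fin (m + 3)) = 1 := rfl
        simp only [hsl, hs0]
        rw [← hLdef]
        field_simp [hd2, hG2ne]
    have key : ∀ i : Fin (m + 3),
        F1 i + F2 i - (if i = L then F1 L else 0) - (if i = 0 then F2 0 else 0)
          = bcoef (m + 1) ξ i * tp (m + 1) (ξ i) x := by
      intro i
      have hLlast : ξ (Fin.last (m + 1 + 1)) = ξ L := rfl
      rcases eq_or_ne i (0 : Fin (m + 3)) with h0 | h0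
      · subst h0
        rw [if_neg h0L, if_pos rfl]
        have hp : pdiff ξ 0 = G1 0 * (ξ 0 - ξ L) := by
          rw [hpd1 0, if_neg (Ne.symm h0L)]
        rw [bcoef, hp, hLlast, tp_succ, hF1def]
        field_simp [hG1ne, hne 0 L h0L]
        ring
      · rcases eq_or_ne i L with hL | hL
        · subst hL
          rw [if_pos rfl, if_neg h0]
          have hp : pdiff ξ L = (ξ L - ξ 0) * G2 L := by
            rw [hpd2 L, if_neg (Ne.symm h0)]
          rw [bcoef, hp, hLlast, tp_succ, hF2def]
          field_simp [hG2ne, hne L 0 (Ne.symm h0L)]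
          ring
        · rw [if_neg hL, if_neg h0]
          have hp1i : pdiff ξ i = G1 i * (ξ i - ξ L) := by
            rw [hpd1 i, if_neg (Ne.symm hL)]
          have hp2i : pdiff ξ i = (ξ i - ξ 0) * G2 i := by
            rw [hpd2 i, if_neg (Ne.symm h0)]
          have hrel : (ξ i - ξ 0) * G2 i = G1 i * (ξ i - ξ L) := by
            rw [← hp2i, hp1i]
          have hi0 := hne i 0 h0
          have hiL := hne i L hL
          have hG2eq : G2 i = G1 i * (ξ i - ξ L) / (ξ i - ξ 0) := by
            rw [eq_div_iff hi0]
            linarith [hrel]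
          rw [bcoef, hp1i, hLlast, tp_succ, hF1def, hF2def]
          beta_reduce
          rw [hG2eq]
          field_simp [hG1ne, hi0, hiL]
          ring
    have sum1 : ∑ i' : Fin (m + 2), F1 i'.castSucc = (∑ i, F1 i) - F1 L := by
      rw [Fin.sum_univ_castSucc (f := F1)]
      ring
    have sum2 : ∑ i' : Fin (m + 2), F2 i'.succ = (∑ i, F2 i) - F2 0 := by
      rw [Fin.sum_univ_succ (f := F2)]
      ring
    rw [step1, sum1, sum2, ← Finset.sum_congr rfl (fun i _ => key i)]
    rw [Finset.sum_sub_distrib, Finset.sum_sub_distrib, Finset.sum_add_distrib]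
    simp only [Finset.sum_ite_eq', Finset.mem_univ, if_pos]
    ring

lemma finiteDiff_tp_zero_of_le {k r : ℕ} (hkr : k < r) {h : ℝ} (hh : 0 ≤ h) {a x : ℝ}
    (ha : a ≤ x) : finiteDiff r h (tp k a) x = 0 := by
  have he : finiteDiff r h (tp k a) x = finiteDiff r h (fun y => (y - a) ^ k) x := by
    unfold finiteDiff
    refine Finset.sum_congr rfl fun j _ => ?_
    congr 1
    rw [tp, if_pos]
    nlinarith [mul_nonneg (Nat.cast_nonneg (α := ℝ) j) hh]
  rw [he, finiteDiff_eq_fwdDiff, fwdDiff_iter_pow a h k r hkr]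
  simp

lemma finiteDiff_tp_zero_of_gt {k r : ℕ} {h : ℝ} (hh : 0 ≤ h) {a x : ℝ}
    (ha : x + r * h < a) : finiteDiff r h (tp k a) x = 0 := by
  unfold finiteDiff
  refine Finset.sum_eq_zero fun j hj => ?_
  have hj' : (j : ℝ) ≤ r := by exact_mod_cast Nat.lt_succ_iff.1 (Finset.mem_range.1 hj)
  have hna : ¬ a ≤ x + j * h := by nlinarith
  rw [tp, if_neg hna, mul_zero]

lemma finiteDiff_tp_bound {k r : ℕ} (hkr : k < r) {h : ℝ} (hh : 0 < h) (a x : ℝ) :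
    |finiteDiff r h (tp k a) x| ≤ 2 ^ r * (r * h) ^ k := by
  have hrh : (0:ℝ) ≤ (r : ℝ) * h := by positivity
  rcases le_or_gt a x with ha | ha
  · rw [finiteDiff_tp_zero_of_le hkr hh.le ha]
    simp
    positivity
  rcases lt_or_ge (x + r * h) a with hb | hb
  · rw [finiteDiff_tp_zero_of_gt hh.le hb]
    simp
    positivity
  · calc |finiteDiff r h (tp k a) x|
        ≤ ∑ j ∈ Finset.range (r + 1), |(r.choose j : ℝ) * (-1 : ℝ) ^ (r - j) * tp k a (x + j * h)| :=
          Finset.abs_sum_le_sum_abs _ _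
      _ ≤ ∑ j ∈ Finset.range (r + 1), (r.choose j : ℝ) * ((r : ℝ) * h) ^ k := by
          refine Finset.sum_le_sum fun j hj => ?_
          have hj' : (j : ℝ) ≤ r := by
            exact_mod_cast Nat.lt_succ_iff.1 (Finset.mem_range.1 hj)
          rw [abs_mul, abs_mul, abs_pow, abs_neg, abs_one, one_pow, mul_one, Nat.abs_cast]
          refine mul_le_mul_of_nonneg_left ?_ (Nat.cast_nonneg _)
          rw [tp]
          split_ifs with hc
          · have h1 : 0 ≤ x + j * h - a := by linarith
            have h2 : x + j * h - a ≤ r * h := by nlinarith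
            rw [abs_pow, abs_of_nonneg h1]
            exact pow_le_pow_left₀ h1 h2 k
          · simpa using by positivity
      _ = 2 ^ r * ((r : ℝ) * h) ^ k := by
          rw [← Finset.sum_mul]
          congr 1
          exact_mod_cast congrArg (Nat.cast (R := ℝ)) (Nat.sum_range_choose r)

lemma finiteDiff_sum_mul {n : ℕ} (r : ℕ) (h : ℝ) (c : Fin n → ℝ) (f : Fin n → ℝ → ℝ) (x : ℝ) :
    finiteDiff r h (fun y => ∑ i, c i * f i y) x = ∑ i, c i * finiteDiff r h (f i) x := by
  unfold finiteDiff
  simp only [Finset.mul_sum]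
  rw [Finset.sum_comm]
  exact Finset.sum_congr rfl fun i _ => Finset.sum_congr rfl fun j _ => by ring

lemma bspline_fd_eq (k : ℕ) (ξ : Fin (k + 2) → ℝ) (hξ : StrictMono ξ) (r : ℕ) (h x : ℝ) :
    finiteDiff r h (bspline k ξ) x = ∑ i, bcoef k ξ i * finiteDiff r h (tp k (ξ i)) x := by
  rw [show bspline k ξ = fun y => ∑ i, bcoef k ξ i * tp k (ξ i) y from
    funext (bspline_rep k ξ hξ), finiteDiff_sum_mul]

lemma bspline_fd_zero {k r : ℕ} (hkr : k < r) (ξ : Fin (k + 2) → ℝ) (hξ : StrictMono ξ)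
    {h : ℝ} (hh : 0 < h) {x : ℝ} (hx : ∀ i, ξ i ≤ x ∨ x + r * h < ξ i) :
    finiteDiff r h (bspline k ξ) x = 0 := by
  rw [bspline_fd_eq k ξ hξ]
  refine Finset.sum_eq_zero fun i _ => ?_
  rcases hx i with h1 | h1
  · rw [finiteDiff_tp_zero_of_le hkr hh.le h1, mul_zero]
  · rw [finiteDiff_tp_zero_of_gt hh.le h1, mul_zero]

lemma bspline_fd_bound {k r : ℕ} (hkr : k < r) (ξ : Fin (k + 2) → ℝ) (hξ : StrictMono ξ)
    {h : ℝ} (hh : 0 < h) (x : ℝ) :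
    |finiteDiff r h (bspline k ξ) x| ≤ (∑ i, |bcoef k ξ i|) * (2 ^ r * ((r : ℝ) * h) ^ k) := by
  rw [bspline_fd_eq k ξ hξ]
  calc |∑ i, bcoef k ξ i * finiteDiff r h (tp k (ξ i)) x|
      ≤ ∑ i, |bcoef k ξ i * finiteDiff r h (tp k (ξ i)) x| := Finset.abs_sum_le_sum_abs _ _
    _ ≤ ∑ i, |bcoef k ξ i| * (2 ^ r * ((r : ℝ) * h) ^ k) := by
        refine Finset.sum_le_sum fun i _ => ?_
        rw [abs_mul]
        exact mul_le_mul_of_nonneg_left (finiteDiff_tp_bound hkr hh _ x) (abs_nonneg _)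
    _ = _ := by rw [Finset.sum_mul]

lemma measurable_tp (k : ℕ) (a : ℝ) : Measurable (tp k a) := by
  unfold tp
  exact Measurable.ite (measurableSet_le measurable_const measurable_id)
    ((measurable_id.sub_const a).pow_const k) measurable_const

lemma measurable_bspline (k : ℕ) (ξ : Fin (k + 2) → ℝ) (hξ : StrictMono ξ) :
    Measurable (bspline k ξ) := by
  rw [show bspline k ξ = fun y => ∑ i, bcoef k ξ i * tp k (ξ i) y from
    funext (bspline_rep k ξ hξ)]
  exact Finset.measurable_sum _ fun i _ => (measurable_tp k (ξ i)).const_mul _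

lemma measurable_finiteDiff (r : ℕ) (h : ℝ) {f : ℝ → ℝ} (hf : Measurable f) :
    Measurable (finiteDiff r h f) := by
  unfold finiteDiff
  exact Finset.measurable_sum _ fun j _ =>
    (hf.comp (measurable_id.add_const ((j : ℝ) * h))).const_mul _

/-- for `k ≥ 1`, a strictly increasing knot vector in `[0,1]`,
`1 ≤ p < ∞` and an integer `r ≥ k + 1`, there is a constant `C > 0` with
`ω_r(B_k(·; ξ), t)_p ≤ C · t^{k + 1/p}` for all `t ∈ (0, 1]`. -/
theorem bspline_modSmooth_bound (k : ℕ) (hk : 1 ≤ k) (ξ : Fin (k + 2) → ℝ)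
    (hξ : StrictMono ξ) (hξ0 : 0 ≤ ξ 0) (hξ1 : ξ (Fin.last (k + 1)) ≤ 1)
    (p : ℝ) (hp : 1 ≤ p) (r : ℕ) (hr : k + 1 ≤ r) :
    ∃ C > 0, ∀ t ∈ Set.Ioc (0 : ℝ) 1,
      modSmooth p r (bspline k ξ) t ≤ C * t ^ ((k : ℝ) + 1 / p) := by
  have hp0 : (0 : ℝ) < p := lt_of_lt_of_le one_pos hp
  have hpne : p ≠ 0 := hp0.ne'
  have hkr : k < r := by omega
  have hrpos : (0 : ℝ) < r := by
    have : 0 < r := by omega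
    exact_mod_cast this
  set B := bspline k ξ with hB
  set M : ℝ := (∑ i, |bcoef k ξ i|) * (2 ^ r * (r : ℝ) ^ k) with hM
  have hM0 : 0 ≤ M := by positivity
  set X : ℝ := (((k : ℝ) + 2) * r) ^ (1 / p) with hX
  have hX0 : 0 < X := Real.rpow_pos_of_pos (by positivity) _
  refine ⟨(M + 1) * X, by positivity, fun t ht => ?_⟩
  obtain ⟨ht0, ht1⟩ := ht
  have hbnd0 : 0 ≤ (M + 1) * X * t ^ ((k : ℝ) + 1 / p) := by positivity
  rw [modSmooth]
  refine Real.sSup_le ?_ hbnd0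
  rintro y ⟨h, ⟨hh0, hht⟩, rfl⟩
  have hhle1 : h ≤ 1 := hht.trans ht1
  -- the exceptional set
  set S : Set ℝ := ⋃ i, Set.Ico (ξ i - r * h) (ξ i) with hS
  have hSm : MeasurableSet S := MeasurableSet.iUnion fun i => measurableSet_Ico
  -- pointwise bound
  have key1 : ∀ x, |finiteDiff r h B x| ≤ M * h ^ k := by
    intro x
    have := bspline_fd_bound hkr ξ hξ hh0 x
    calc |finiteDiff r h B x| ≤ (∑ i, |bcoef k ξ i|) * (2 ^ r * ((r : ℝ) * h) ^ k) := this
      _ = M * h ^ k := by rw [hM, mul_pow]; ring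
  have key2 : ∀ x ∉ S, finiteDiff r h B x = 0 := by
    intro x hx
    simp only [hS, Set.mem_iUnion, Set.mem_Ico, not_exists, not_and, not_lt] at hx
    refine bspline_fd_zero hkr ξ hξ hh0 fun i => ?_
    rcases le_or_gt (ξ i - r * h) x with hc | hc
    · exact Or.inl (hx i hc)
    · exact Or.inr (by linarith)
  have hMh0 : 0 ≤ M * h ^ k := by positivity
  -- pointwise domination
  have hdom : ∀ x, |finiteDiff r h B x| ^ p ≤ S.indicator (fun _ => (M * h ^ k) ^ p) x := by
    intro x
    by_cases hxS : x ∈ S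
    · rw [Set.indicator_of_mem hxS]
      exact Real.rpow_le_rpow (abs_nonneg _) (key1 x) hp0.le
    · rw [Set.indicator_of_notMem hxS, key2 x hxS]
      simp [Real.zero_rpow hpne]
  -- measurability / integrability
  have hfdm : Measurable (finiteDiff r h B) :=
    measurable_finiteDiff r h (measurable_bspline k ξ hξ)
  have hgm : Measurable fun x => |finiteDiff r h B x| ^ p :=
    (Real.continuous_rpow_const hp0.le).measurable.comp hfdm.abs
  have hgnn : ∀ x, 0 ≤ |finiteDiff r h B x| ^ p :=
    fun x => Real.rpow_nonneg (abs_nonneg _) p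
  have hIm : IntegrableOn (fun x => |finiteDiff r h B x| ^ p)
      (Set.Ioo (0 : ℝ) (1 - r * h)) volume := by
    refine Integrable.mono' (g := fun _ => (M * h ^ k) ^ p)
      (integrableOn_const measure_Ioo_lt_top.ne) hgm.aestronglyMeasurable ?_
    refine Filter.Eventually.of_forall fun x => ?_
    rw [Real.norm_eq_abs, abs_of_nonneg (hgnn x)]
    exact Real.rpow_le_rpow (abs_nonneg _) (key1 x) hp0.le
  have hIi : IntegrableOn (S.indicator fun _ => (M * h ^ k) ^ p)
      (Set.Ioo (0 : ℝ) (1 - r * h)) volume :=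
    (integrableOn_const measure_Ioo_lt_top.ne).indicator hSm
  -- integral estimate
  have hvol : (volume (Set.Ioo (0 : ℝ) (1 - r * h) ∩ S)).toReal ≤ ((k : ℝ) + 2) * r * h := by
    have h1 : volume (Set.Ioo (0 : ℝ) (1 - r * h) ∩ S) ≤ volume S :=
      measure_mono Set.inter_subset_right
    have h2 : volume S ≤ ∑ i : Fin (k + 2), volume (Set.Ico (ξ i - r * h) (ξ i)) := by
      rw [hS]
      exact (measure_iUnion_le _).trans_eq (tsum_fintype _)
    have h3 : ∑ i : Fin (k + 2), volume (Set.Ico (ξ i - r * h) (ξ i))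
        = ((k : ℕ) + 2 : ℕ) * ENNReal.ofReal (r * h) := by
      rw [Finset.sum_congr rfl fun i _ => ?_]
      · rw [Finset.sum_const, Finset.card_univ, Fintype.card_fin, nsmul_eq_mul]
      · rw [Real.volume_Ico]
        congr 1
        ring
    have h4 : volume (Set.Ioo (0 : ℝ) (1 - r * h) ∩ S)
        ≤ ((k : ℕ) + 2 : ℕ) * ENNReal.ofReal (r * h) := by
      rw [← h3]; exact h1.trans h2
    calc (volume (Set.Ioo (0 : ℝ) (1 - r * h) ∩ S)).toReal
        ≤ (((k : ℕ) + 2 : ℕ) * ENNReal.ofReal (r * h) : ℝ≥0∞).toReal := by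
          refine ENNReal.toReal_mono ?_ h4
          exact ENNReal.mul_ne_top (by simp) ENNReal.ofReal_ne_top
      _ = ((k : ℝ) + 2) * r * h := by
          rw [ENNReal.toReal_mul, ENNReal.toReal_ofReal (by positivity),
            ENNReal.toReal_natCast]
          push_cast
          ring
  have hint : (∫ x in Set.Ioo (0 : ℝ) (1 - r * h), |finiteDiff r h B x| ^ p)
      ≤ (M * h ^ k) ^ p * (((k : ℝ) + 2) * r * h) := by
    calc (∫ x in Set.Ioo (0 : ℝ) (1 - r * h), |finiteDiff r h B x| ^ p)
        ≤ ∫ x in Set.Ioo (0 : ℝ) (1 - r * h), S.indicator (fun _ => (M * h ^ k) ^ p) x :=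
          setIntegral_mono_on hIm hIi measurableSet_Ioo fun x _ => hdom x
      _ = ∫ x in Set.Ioo (0 : ℝ) (1 - r * h) ∩ S, (M * h ^ k) ^ p :=
          setIntegral_indicator hSm
      _ = (volume (Set.Ioo (0 : ℝ) (1 - r * h) ∩ S)).toReal * (M * h ^ k) ^ p := by
          rw [setIntegral_const, smul_eq_mul]
          rfl
      _ ≤ (M * h ^ k) ^ p * (((k : ℝ) + 2) * r * h) := by
          rw [mul_comm]
          exact mul_le_mul_of_nonneg_left hvol (Real.rpow_nonneg hMh0 p)
  -- take p-th root
  have hintnn : 0 ≤ ∫ x in Set.Ioo (0 : ℝ) (1 - r * h), |finiteDiff r h B x| ^ p :=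
    setIntegral_nonneg measurableSet_Ioo fun x _ => hgnn x
  have hroot : (∫ x in Set.Ioo (0 : ℝ) (1 - r * h), |finiteDiff r h B x| ^ p) ^ (1 / p)
      ≤ (M * h ^ k) * (X * h ^ (1 / p)) := by
    have s1 : (∫ x in Set.Ioo (0 : ℝ) (1 - r * h), |finiteDiff r h B x| ^ p) ^ (1 / p)
        ≤ ((M * h ^ k) ^ p * (((k : ℝ) + 2) * r * h)) ^ (1 / p) :=
      Real.rpow_le_rpow hintnn hint (by positivity)
    have s2 : ((M * h ^ k) ^ p * (((k : ℝ) + 2) * r * h)) ^ (1 / p)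
        = (M * h ^ k) * (X * h ^ (1 / p)) := by
      rw [hX, Real.mul_rpow (Real.rpow_nonneg hMh0 p) (by positivity),
        Real.mul_rpow (by positivity) hh0.le, one_div,
        Real.rpow_rpow_inv hMh0 hpne]
    rw [← s2]
    exact s1
  calc (∫ x in Set.Ioo (0 : ℝ) (1 - r * h), |finiteDiff r h B x| ^ p) ^ (1 / p)
      ≤ (M * h ^ k) * (X * h ^ (1 / p)) := hroot
    _ ≤ ((M + 1) * t ^ k) * (X * t ^ (1 / p)) := by
        have hhk : h ^ k ≤ t ^ k := pow_le_pow_left₀ hh0.le hht k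
        have hhp : h ^ (1 / p) ≤ t ^ (1 / p) :=
          Real.rpow_le_rpow hh0.le hht (by positivity)
        have e1 : M * h ^ k ≤ (M + 1) * t ^ k :=
          mul_le_mul (by linarith) hhk (pow_nonneg hh0.le k) (by linarith)
        have e2 : X * h ^ (1 / p) ≤ X * t ^ (1 / p) :=
          mul_le_mul_of_nonneg_left hhp hX0.le
        exact mul_le_mul e1 e2 (by positivity) (by positivity)
    _ = (M + 1) * X * t ^ ((k : ℝ) + 1 / p) := by
        rw [Real.rpow_add ht0, Real.rpow_natCast]
        ring
end
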